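/- Let σ₁, σ₂ > 0 and U > 0. The explicit PCLVG call prices satisfy the static no-arbitrage conditions: (i) for every τ > 0 and every K > 0, (U − K)^+ < C^σ(U,K,τ) < U; (ii) for every τ > 0, the map K ↦ C^σ(U,K,τ) is nonincreasing on (0,∞); (iii) for every τ > 0, the map K ↦ C^σ(U,K,τ) is convex on (0,∞); (iv) for every K > 0, the map τ ↦ C^σ(U,K,τ) is nondecreasing on (0,∞). -/

import Mathlib

open MeasureTheory Filter Set

/-- Standard normal cumulative distribution function. -/
noncomputable def stdNormalCDF (x : ℝ) : ℝ :=
  (Real.sqrt (2 * Real.pi))⁻¹ * ∫ y in Set.Iic x, Real.exp (-(y ^ 2) / 2)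

/-- Black–Scholes call price with zero interest and dividend rates. -/
noncomputable def bsCall (S K τ σ : ℝ) : ℝ :=
  let d1 := (Real.log (S / K) + σ ^ 2 * τ / 2) / (σ * Real.sqrt τ)
  S * stdNormalCDF d1 - K * stdNormalCDF (d1 - σ * Real.sqrt τ)

/-- Black–Scholes put price with zero interest and dividend rates. -/
noncomputable def bsPut (S K τ σ : ℝ) : ℝ := bsCall S K τ σ - S + K

/-- The denominator appearing in the PCLVG call price formula. -/
noncomputable def pclvgD (σ1 σ2 U τ : ℝ) : ℝ :=
  1 / σ1 + 1 / σ2 - (1 / σ2 - 1 / σ1) * Real.exp (-2 * U / (σ1 * τ))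

/-- The explicit PCLVG call price `C^σ(U,K,τ)`. -/
noncomputable def pclvgCall (σ1 σ2 U K τ : ℝ) : ℝ :=
  if K < U then
    (U - K) +
      τ * Real.exp (-(U - K) / (σ1 * τ)) * (1 - Real.exp (-2 * K / (σ1 * τ))) /
        pclvgD σ1 σ2 U τ
  else
    τ * Real.exp (-(K - U) / (σ2 * τ)) * (1 - Real.exp (-2 * U / (σ1 * τ))) /
      pclvgD σ1 σ2 U τ

/-- The PCLVG put price `P^σ(U,K,τ) = C^σ(U,K,τ) − (U − K)`. -/
noncomputable def pclvgPut (σ1 σ2 U K τ : ℝ) : ℝ := pclvgCall σ1 σ2 U K τ - (U - K)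

-- core hyperbolic lemmas
lemma core_sinh_lt {x : ℝ} (hx : 0 < x) : Real.sinh x < x * Real.cosh x := by
  have hmono : StrictMonoOn (fun x : ℝ => x * Real.cosh x - Real.sinh x) (Set.Ici 0) := by
    have hd : ∀ x : ℝ, HasDerivAt (fun x : ℝ => x * Real.cosh x - Real.sinh x)
        (x * Real.sinh x) x := by
      intro x
      have h1 := (hasDerivAt_id x).mul (Real.hasDerivAt_cosh x)
      have h2 := h1.sub (Real.hasDerivAt_sinh x)
      exact h2.congr_deriv (by rw [id_eq]; ring)
    refine strictMonoOn_of_deriv_pos (convex_Ici 0) ?_ ?_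
    · exact (Differentiable.continuous (fun x => (hd x).differentiableAt)).continuousOn
    · intro y hy
      rw [interior_Ici, Set.mem_Ioi] at hy
      rw [(hd y).deriv]
      exact mul_pos hy (by rwa [Real.sinh_pos_iff])
  have := hmono (Set.self_mem_Ici) (Set.mem_Ici.2 hx.le) hx
  simpa using this
lemma core_sinh_le {x : ℝ} (hx : 0 ≤ x) : Real.sinh x ≤ x * Real.cosh x := by
  rcases hx.eq_or_lt with h | h
  · simp [← h]
  · exact (core_sinh_lt h).le
-- L3 : x * cosh x / sinh x is monotone: cross-multiplied
lemma L3 {x y : ℝ} (hx : 0 < x) (hxy : x ≤ y) :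
    x * Real.cosh x * Real.sinh y ≤ y * Real.cosh y * Real.sinh x := by
  have hmono : MonotoneOn (fun x : ℝ => x * Real.cosh x / Real.sinh x) (Set.Ioi 0) := by
    have hd : ∀ x : ℝ, x ∈ Set.Ioi 0 → HasDerivAt (fun x : ℝ => x * Real.cosh x / Real.sinh x)
        ((( 1 * Real.cosh x + x * Real.sinh x) * Real.sinh x - x * Real.cosh x * Real.cosh x)
          / (Real.sinh x)^2) x := by
      intro x hx
      have hsx : Real.sinh x ≠ 0 := ne_of_gt (by rwa [Real.sinh_pos_iff, ← Set.mem_Ioi])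
      exact (((hasDerivAt_id x).mul (Real.hasDerivAt_cosh x)).div (Real.hasDerivAt_sinh x) hsx)
    refine monotoneOn_of_deriv_nonneg (convex_Ioi 0) ?_ ?_ ?_
    · intro z hz
      exact ((hd z hz).differentiableAt).continuousAt.continuousWithinAt
    · intro z hz
      rw [interior_Ioi] at hz
      exact ((hd z hz).differentiableAt).differentiableWithinAt
    · intro z hz
      rw [interior_Ioi] at hz
      rw [(hd z hz).deriv]
      have hz0 : (0:ℝ) < z := hz
      have hs : 0 < Real.sinh z := by rwa [Real.sinh_pos_iff]
      apply div_nonneg _ (sq_nonneg _)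
      have h1 : z ≤ Real.sinh z * Real.cosh z := by
        have h2 : 2 * z ≤ Real.sinh (2 * z) := Real.self_le_sinh_iff.2 (by linarith)
        rw [Real.sinh_two_mul] at h2; linarith
      have hc := Real.cosh_sq z
      nlinarith
  have hy : 0 < y := lt_of_lt_of_le hx hxy
  have h := hmono (Set.mem_Ioi.2 hx) (Set.mem_Ioi.2 hy) hxy
  have hsx : 0 < Real.sinh x := by rwa [Real.sinh_pos_iff]
  have hsy : 0 < Real.sinh y := by rwa [Real.sinh_pos_iff]
  rw [div_le_div_iff₀ hsx hsy] at h
  linarith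

-- L4 : sinh x / x monotone: q * sinh p ≤ p * sinh q for 0 ≤ p ≤ q
lemma L4 {p q : ℝ} (hp : 0 ≤ p) (hpq : p ≤ q) : q * Real.sinh p ≤ p * Real.sinh q := by
  rcases hp.eq_or_lt with h | h
  · simp [← h]
  have hmono : MonotoneOn (fun x : ℝ => Real.sinh x / x) (Set.Ioi 0) := by
    have hd : ∀ x : ℝ, x ∈ Set.Ioi 0 → HasDerivAt (fun x : ℝ => Real.sinh x / x)
        ((Real.cosh x * x - Real.sinh x * 1) / x^2) x := by
      intro x hx
      exact (Real.hasDerivAt_sinh x).div (hasDerivAt_id x) (ne_of_gt hx)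
    refine monotoneOn_of_deriv_nonneg (convex_Ioi 0) ?_ ?_ ?_
    · intro z hz; exact ((hd z hz).differentiableAt).continuousAt.continuousWithinAt
    · intro z hz; rw [interior_Ioi] at hz
      exact ((hd z hz).differentiableAt).differentiableWithinAt
    · intro z hz; rw [interior_Ioi] at hz
      rw [(hd z hz).deriv]
      apply div_nonneg _ (sq_nonneg _)
      have := core_sinh_le (le_of_lt hz)
      nlinarith
  have hq : 0 < q := lt_of_lt_of_le h hpq
  have hm := hmono (Set.mem_Ioi.2 h) (Set.mem_Ioi.2 hq) hpq
  rw [div_le_div_iff₀ h hq] at hm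
  linarith

-- numerator for L5
lemma L5num {b g w : ℝ} (hb : 0 < b) (hbg : b ≤ g) (hw : 0 < w) :
    b * Real.sinh (g*w) * Real.cosh (b*w) ≤ g * Real.cosh (g*w) * Real.sinh (b*w) := by
  have key := L4 (p := (g - b) * w) (q := (g + b) * w)
    (mul_nonneg (by linarith) hw.le) (by nlinarith)
  have e1 : Real.sinh ((g + b) * w) = Real.sinh (g*w) * Real.cosh (b*w)
      + Real.cosh (g*w) * Real.sinh (b*w) := by
    rw [show (g + b) * w = g*w + b*w by ring, Real.sinh_add]
  have e2 : Real.sinh ((g - b) * w) = Real.sinh (g*w) * Real.cosh (b*w)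
      - Real.cosh (g*w) * Real.sinh (b*w) := by
    rw [show (g - b) * w = g*w - b*w by ring, Real.sinh_sub]
  rw [e1, e2] at key
  nlinarith
-- L5 : sinh (g w)/sinh (b w) monotone in w
lemma L5 {b g u v : ℝ} (hb : 0 < b) (hbg : b ≤ g) (hu : 0 < u) (huv : u ≤ v) :
    Real.sinh (g*u) * Real.sinh (b*v) ≤ Real.sinh (g*v) * Real.sinh (b*u) := by
  have hmono : MonotoneOn (fun w : ℝ => Real.sinh (g*w) / Real.sinh (b*w)) (Set.Ioi 0) := by
    have hd : ∀ w : ℝ, w ∈ Set.Ioi 0 → HasDerivAt (fun w : ℝ => Real.sinh (g*w) / Real.sinh (b*w))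
        ((Real.cosh (g*w) * g * Real.sinh (b*w) - Real.sinh (g*w) * (Real.cosh (b*w) * b))
          / (Real.sinh (b*w))^2) w := by
      intro w hw
      have hbw : Real.sinh (b*w) ≠ 0 := ne_of_gt (Real.sinh_pos_iff.2 (mul_pos hb hw))
      have hg : HasDerivAt (fun w : ℝ => g*w) g w := by
        simpa using (hasDerivAt_id w).const_mul g
      have hbb : HasDerivAt (fun w : ℝ => b*w) b w := by
        simpa using (hasDerivAt_id w).const_mul b
      have h1 : HasDerivAt (fun w : ℝ => Real.sinh (g*w)) (Real.cosh (g*w) * g) w := hg.sinh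
      have h2 : HasDerivAt (fun w : ℝ => Real.sinh (b*w)) (Real.cosh (b*w) * b) w := hbb.sinh
      exact h1.div h2 hbw
    refine monotoneOn_of_deriv_nonneg (convex_Ioi 0) ?_ ?_ ?_
    · intro z hz; exact ((hd z hz).differentiableAt).continuousAt.continuousWithinAt
    · intro z hz; rw [interior_Ioi] at hz
      exact ((hd z hz).differentiableAt).differentiableWithinAt
    · intro z hz; rw [interior_Ioi] at hz
      rw [(hd z hz).deriv]
      apply div_nonneg _ (sq_nonneg _)
      have := L5num hb hbg hz
      nlinarith
  have hv : 0 < v := lt_of_lt_of_le hu huv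
  have hm := hmono (Set.mem_Ioi.2 hu) (Set.mem_Ioi.2 hv) huv
  have hsu : 0 < Real.sinh (b*u) := Real.sinh_pos_iff.2 (mul_pos hb hu)
  have hsv : 0 < Real.sinh (b*v) := Real.sinh_pos_iff.2 (mul_pos hb hv)
  rw [div_le_div_iff₀ hsu hsv] at hm
  linarith

-- L6 : cosh ratio
lemma L6 {b g u v : ℝ} (hb : 0 ≤ b) (hbg : b ≤ g) (hu : 0 ≤ u) (huv : u ≤ v) :
    Real.cosh (g*u) * Real.cosh (b*v) ≤ Real.cosh (g*v) * Real.cosh (b*u) := by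
  have e1 : 2 * (Real.cosh (g*u) * Real.cosh (b*v))
      = Real.cosh (g*u + b*v) + Real.cosh (g*u - b*v) := by
    rw [Real.cosh_add, Real.cosh_sub]; ring
  have e2 : 2 * (Real.cosh (g*v) * Real.cosh (b*u))
      = Real.cosh (g*v + b*u) + Real.cosh (g*v - b*u) := by
    rw [Real.cosh_add, Real.cosh_sub]; ring
  have h1 : Real.cosh (g*u + b*v) ≤ Real.cosh (g*v + b*u) := by
    rw [Real.cosh_le_cosh]
    have n1 : 0 ≤ g*u + b*v := by nlinarith
    have n2 : 0 ≤ g*v + b*u := by nlinarith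
    rw [abs_of_nonneg n1, abs_of_nonneg n2]
    nlinarith
  have h2 : Real.cosh (g*u - b*v) ≤ Real.cosh (g*v - b*u) := by
    rw [Real.cosh_le_cosh]
    have hnn : 0 ≤ g*v - b*u := by nlinarith
    rw [abs_of_nonneg hnn]
    rw [abs_le]
    constructor <;> nlinarith
  linarith

section basic
variable {σ1 σ2 U τ : ℝ} (h1 : 0 < σ1) (h2 : 0 < σ2) (hU : 0 < U) (hτ : 0 < τ)

lemma D_eq (h1 : 0 < σ1) (h2 : 0 < σ2) :
    pclvgD σ1 σ2 U τ = (1 + Real.exp (-2 * U / (σ1 * τ))) / σ1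
      + (1 - Real.exp (-2 * U / (σ1 * τ))) / σ2 := by
  unfold pclvgD; field_simp; ring

lemma E_lt_one (h1 : 0 < σ1) (hU : 0 < U) (hτ : 0 < τ) :
    Real.exp (-2 * U / (σ1 * τ)) < 1 := by
  apply Real.exp_lt_one_iff.2
  have : 0 < σ1 * τ := mul_pos h1 hτ
  have h : 0 < 2 * U / (σ1 * τ) := by positivity
  linarith [h, (by ring : -2 * U / (σ1 * τ) = -(2 * U / (σ1 * τ)))]

lemma D_pos (h1 : 0 < σ1) (h2 : 0 < σ2) (hU : 0 < U) (hτ : 0 < τ) :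
    0 < pclvgD σ1 σ2 U τ := by
  rw [D_eq h1 h2]
  have hE1 : Real.exp (-2 * U / (σ1 * τ)) < 1 := E_lt_one h1 hU hτ
  have hE0 : 0 < Real.exp (-2 * U / (σ1 * τ)) := Real.exp_pos _
  have : 0 < (1 + Real.exp (-2 * U / (σ1 * τ))) / σ1 := by positivity
  have : 0 < (1 - Real.exp (-2 * U / (σ1 * τ))) / σ2 := by
    apply div_pos (by linarith) h2
  linarith

-- L1 in exp form: for y > 0, 1 - e^{-2y} < y (1 + e^{-2y})
lemma L1exp {y : ℝ} (hy : 0 < y) :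
    1 - Real.exp (-(2*y)) < y * (1 + Real.exp (-(2*y))) := by
  have h := core_sinh_lt hy
  rw [Real.sinh_eq, Real.cosh_eq] at h
  have hab : Real.exp y * Real.exp (-y) = 1 := by
    rw [← Real.exp_add]; simp
  have h2 : Real.exp (-(2*y)) = Real.exp (-y) * Real.exp (-y) := by
    rw [← Real.exp_add]; congr 1; ring
  have he : 0 < Real.exp (-y) := Real.exp_pos _
  rw [h2]
  nlinarith

end basic

lemma part_i {σ1 σ2 U K τ : ℝ} (h1 : 0 < σ1) (h2 : 0 < σ2) (hU : 0 < U)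
    (hτ : 0 < τ) (hK : 0 < K) :
    max (U - K) 0 < pclvgCall σ1 σ2 U K τ ∧ pclvgCall σ1 σ2 U K τ < U := by
  have hD := D_pos (σ2 := σ2) h1 h2 hU hτ
  have hs : 0 < σ1 * τ := mul_pos h1 hτ
  set E := Real.exp (-2 * U / (σ1 * τ)) with hEdef
  have hE1 : E < 1 := E_lt_one h1 hU hτ
  have hE0 : 0 < E := Real.exp_pos _
  by_cases hKU : K < U
  · rw [pclvgCall, if_pos hKU]
    set T := τ * Real.exp (-(U - K) / (σ1 * τ)) * (1 - Real.exp (-2 * K / (σ1 * τ))) /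
        pclvgD σ1 σ2 U τ with hT
    have hexpK : Real.exp (-2 * K / (σ1 * τ)) < 1 := by
      apply Real.exp_lt_one_iff.2
      have : 0 < 2 * K / (σ1 * τ) := by positivity
      linarith [(by ring : -2 * K / (σ1 * τ) = -(2 * K / (σ1 * τ)))]
    have hTpos : 0 < T := by
      apply div_pos _ hD
      exact mul_pos (mul_pos hτ (Real.exp_pos _)) (by linarith)
    have hTK : T < K := by
      rw [hT, div_lt_iff₀ hD]
      set x := (U - K) / (σ1 * τ) with hx
      set y := K / (σ1 * τ) with hy
      have hx0 : 0 < x := by apply div_pos (by linarith) hs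
      have hy0 : 0 < y := by apply div_pos hK hs
      have e1 : Real.exp (-(U - K) / (σ1 * τ)) = Real.exp (-x) := by
        congr 1; rw [hx]; ring
      have e2 : Real.exp (-2 * K / (σ1 * τ)) = Real.exp (-(2*y)) := by
        congr 1; rw [hy]; ring
      have e3 : E = Real.exp (-x) * Real.exp (-x) * Real.exp (-(2*y)) := by
        rw [hEdef, ← Real.exp_add, ← Real.exp_add]
        congr 1; rw [hx, hy]; field_simp; ring
      have hty : τ * y = K / σ1 := by rw [hy]; field_simp
      have hL1 := L1exp hy0
      have hex : Real.exp (-x) ≤ 1 := Real.exp_le_one_iff.2 (by linarith)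
      have hexy : Real.exp (-x) * Real.exp (-(2*y)) ≤ 1 := by
        have h2y : Real.exp (-(2*y)) ≤ 1 := Real.exp_le_one_iff.2 (by linarith)
        nlinarith [Real.exp_pos (-x), Real.exp_pos (-(2*y))]
      have key2 : Real.exp (-x) * (1 + Real.exp (-(2*y))) ≤ 1 + E := by
        rw [e3]
        nlinarith [Real.exp_pos (-x), Real.exp_pos (-(2*y))]
      have hKD : K * pclvgD σ1 σ2 U τ = K * ((1+E)/σ1) + K * ((1-E)/σ2) := by
        rw [D_eq h1 h2, ← hEdef]; ring
      rw [e1, e2, hKD]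
      have step1 : τ * Real.exp (-x) * (1 - Real.exp (-(2*y)))
          ≤ τ * Real.exp (-x) * (y * (1 + Real.exp (-(2*y)))) := by
        apply mul_le_mul_of_nonneg_left hL1.le
        positivity
      have step2 : τ * Real.exp (-x) * (y * (1 + Real.exp (-(2*y))))
          = (τ * y) * (Real.exp (-x) * (1 + Real.exp (-(2*y)))) := by ring
      have step3 : (τ * y) * (Real.exp (-x) * (1 + Real.exp (-(2*y))))
          ≤ (τ * y) * (1 + E) := by
        apply mul_le_mul_of_nonneg_left key2
        positivity
      have step4 : (τ * y) * (1 + E) = K * ((1+E)/σ1) := by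
        rw [hty]; ring
      have last : 0 < K * ((1-E)/σ2) := by
        apply mul_pos hK (div_pos (by linarith) h2)
      linarith
    constructor
    · rw [max_eq_left (by linarith)]; linarith
    · linarith
  · rw [pclvgCall, if_neg hKU]
    push_neg at hKU
    have hexp1 : Real.exp (-(K - U) / (σ2 * τ)) ≤ 1 := by
      apply Real.exp_le_one_iff.2
      have h0 : 0 ≤ (K - U) / (σ2 * τ) := by
        apply div_nonneg (by linarith) (by positivity)
      linarith [(by ring : -(K - U) / (σ2 * τ) = -((K - U) / (σ2 * τ)))]
    have hnum : τ * Real.exp (-(K - U) / (σ2 * τ)) * (1 - E) ≤ τ * (1 - E) := by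
      have hpos : (0:ℝ) ≤ τ * (1 - E) := by nlinarith
      calc τ * Real.exp (-(K - U) / (σ2 * τ)) * (1 - E)
          = Real.exp (-(K - U) / (σ2 * τ)) * (τ * (1 - E)) := by ring
        _ ≤ 1 * (τ * (1 - E)) := mul_le_mul_of_nonneg_right hexp1 hpos
        _ = τ * (1 - E) := one_mul _
    have hUD : τ * (1 - E) < U * pclvgD σ1 σ2 U τ := by
      rw [D_eq h1 h2, ← hEdef]
      set y := U / (σ1 * τ) with hy
      have hy0 : 0 < y := by apply div_pos hU hs
      have eE : E = Real.exp (-(2*y)) := by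
        rw [hEdef]; congr 1; rw [hy]; ring
      have hL1 := L1exp hy0
      have hty : τ * y = U / σ1 := by rw [hy]; field_simp
      have hstep : τ * (1 - E) < τ * (y * (1 + E)) := by
        rw [eE]
        apply mul_lt_mul_of_pos_left _ hτ
        exact hL1
      have : τ * (y * (1 + E)) = U * ((1+E)/σ1) := by
        rw [show τ * (y * (1+E)) = (τ*y)*(1+E) by ring, hty]; ring
      have last : 0 < U * ((1-E)/σ2) := mul_pos hU (div_pos (by linarith) h2)
      nlinarith
    have hCU : τ * Real.exp (-(K - U) / (σ2 * τ)) * (1 - E) / pclvgD σ1 σ2 U τ < U := by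
      rw [div_lt_iff₀ hD]
      nlinarith
    have hC0 : 0 < τ * Real.exp (-(K - U) / (σ2 * τ)) * (1 - E) / pclvgD σ1 σ2 U τ := by
      apply div_pos _ hD
      exact mul_pos (mul_pos hτ (Real.exp_pos _)) (by linarith)
    constructor
    · rw [max_eq_right (by linarith)]; exact hC0
    · exact hCU

section derivK
variable {σ1 σ2 U τ : ℝ}

-- branch functions (chosen in derivative-friendly form)
noncomputable def br1 (σ1 σ2 U τ K : ℝ) : ℝ :=
  (U - K) + (τ / pclvgD σ1 σ2 U τ) *
    (Real.exp ((K - U) / (σ1 * τ)) - Real.exp (-((K + U) / (σ1 * τ))))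
noncomputable def br2 (σ1 σ2 U τ K : ℝ) : ℝ :=
  (τ * (1 - Real.exp (-2 * U / (σ1 * τ))) / pclvgD σ1 σ2 U τ) *
    Real.exp (-((K - U) / (σ2 * τ)))
noncomputable def gd1 (σ1 σ2 U τ K : ℝ) : ℝ :=
  -1 + (Real.exp ((K - U) / (σ1 * τ)) + Real.exp (-((K + U) / (σ1 * τ))))
    / (σ1 * pclvgD σ1 σ2 U τ)
noncomputable def gd2 (σ1 σ2 U τ K : ℝ) : ℝ :=
  -((1 - Real.exp (-2 * U / (σ1 * τ))) / (σ2 * pclvgD σ1 σ2 U τ)) *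
    Real.exp (-((K - U) / (σ2 * τ)))
noncomputable def gd (σ1 σ2 U τ K : ℝ) : ℝ :=
  if K < U then gd1 σ1 σ2 U τ K else gd2 σ1 σ2 U τ K

lemma call_eq_br1 (h1 : 0 < σ1) (h2 : 0 < σ2) (hU : 0 < U) (hτ : 0 < τ)
    {K : ℝ} (hKU : K < U) : pclvgCall σ1 σ2 U K τ = br1 σ1 σ2 U τ K := by
  rw [pclvgCall, if_pos hKU, br1]
  have hD := (D_pos h1 h2 hU hτ).ne'
  have e1 : Real.exp (-(U - K) / (σ1 * τ)) = Real.exp ((K - U) / (σ1 * τ)) := by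
    congr 1; ring
  have e2 : Real.exp ((K - U) / (σ1 * τ)) * Real.exp (-2 * K / (σ1 * τ))
      = Real.exp (-((K + U) / (σ1 * τ))) := by
    rw [← Real.exp_add]; congr 1; field_simp; ring
  rw [e1, ← e2]
  ring

lemma call_eq_br2 (h1 : 0 < σ1) (h2 : 0 < σ2) (hU : 0 < U) (hτ : 0 < τ)
    {K : ℝ} (hKU : ¬ K < U) : pclvgCall σ1 σ2 U K τ = br2 σ1 σ2 U τ K := by
  rw [pclvgCall, if_neg hKU, br2]
  have e1 : Real.exp (-(K - U) / (σ2 * τ)) = Real.exp (-((K - U) / (σ2 * τ))) := by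
    congr 1; ring
  rw [e1]; ring

lemma br1_eq_br2_at_U (h1 : 0 < σ1) (h2 : 0 < σ2) (hU : 0 < U) (hτ : 0 < τ) :
    br1 σ1 σ2 U τ U = br2 σ1 σ2 U τ U := by
  rw [br1, br2]
  have e1 : Real.exp ((U - U) / (σ1 * τ)) = 1 := by norm_num
  have e2 : Real.exp (-((U - U) / (σ2 * τ))) = 1 := by norm_num
  have e3 : Real.exp (-((U + U) / (σ1 * τ))) = Real.exp (-2 * U / (σ1 * τ)) := by
    congr 1; ring
  rw [e1, e2, e3]; ring

lemma gd1_eq_gd2_at_U (h1 : 0 < σ1) (h2 : 0 < σ2) (hU : 0 < U) (hτ : 0 < τ) :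
    gd1 σ1 σ2 U τ U = gd2 σ1 σ2 U τ U := by
  rw [gd1, gd2]
  have hD := D_pos h1 h2 hU hτ
  have e1 : Real.exp ((U - U) / (σ1 * τ)) = 1 := by norm_num
  have e2 : Real.exp (-((U - U) / (σ2 * τ))) = 1 := by norm_num
  have e3 : Real.exp (-((U + U) / (σ1 * τ))) = Real.exp (-2 * U / (σ1 * τ)) := by
    congr 1; ring
  rw [e1, e2, e3]
  have hD := D_pos h1 h2 hU hτ
  have hDe := D_eq (U := U) (τ := τ) h1 h2
  set E := Real.exp (-2 * U / (σ1 * τ)) with hE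
  set D := pclvgD σ1 σ2 U τ with hDdef
  have key : (1 + E) / (σ1 * D) + (1 - E) / (σ2 * D) = 1 := by
    rw [div_add_div _ _ (by positivity) (mul_ne_zero h2.ne' hD.ne')]
    rw [div_eq_one_iff_eq (by positivity)]
    rw [hDe]; field_simp
  have h5 : (1 - E) / (σ2 * D) * 1 = (1 - E) / (σ2 * D) := mul_one _
  linarith
 
lemma br1_hasDeriv (h1 : 0 < σ1) (h2 : 0 < σ2) (hU : 0 < U) (hτ : 0 < τ) (K : ℝ) :
    HasDerivAt (fun K => br1 σ1 σ2 U τ K) (gd1 σ1 σ2 U τ K) K := by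
  have hs : σ1 * τ ≠ 0 := by positivity
  have hd1 : HasDerivAt (fun K : ℝ => (K - U) / (σ1 * τ)) (1 / (σ1 * τ)) K := by
    simpa using (((hasDerivAt_id K).sub_const U).div_const (σ1 * τ))
  have hd2 : HasDerivAt (fun K : ℝ => -((K + U) / (σ1 * τ))) (-(1 / (σ1 * τ))) K := by
    exact (((hasDerivAt_id K).add_const U).div_const (σ1 * τ)).neg
  have he1 := hd1.exp
  have he2 := hd2.exp
  have h := (((hasDerivAt_id K).const_sub U)).add
    (((he1.sub he2).const_mul (τ / pclvgD σ1 σ2 U τ)))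
  refine h.congr_deriv ?_
  rw [gd1]
  have hD := (D_pos h1 h2 hU hτ).ne'
  field_simp
  ring

lemma br2_hasDeriv (h1 : 0 < σ1) (h2 : 0 < σ2) (hU : 0 < U) (hτ : 0 < τ) (K : ℝ) :
    HasDerivAt (fun K => br2 σ1 σ2 U τ K) (gd2 σ1 σ2 U τ K) K := by
  have hd1 : HasDerivAt (fun K : ℝ => -((K - U) / (σ2 * τ))) (-(1 / (σ2 * τ))) K := by
    exact (((hasDerivAt_id K).sub_const U).div_const (σ2 * τ)).neg
  have h := (hd1.exp).const_mul (τ * (1 - Real.exp (-2 * U / (σ1 * τ))) / pclvgD σ1 σ2 U τ)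
  refine h.congr_deriv ?_
  rw [gd2]
  have hs : σ2 * τ ≠ 0 := by positivity
  have hD := (D_pos h1 h2 hU hτ).ne'
  field_simp

lemma call_hasDeriv (h1 : 0 < σ1) (h2 : 0 < σ2) (hU : 0 < U) (hτ : 0 < τ) (K : ℝ) :
    HasDerivAt (fun K => pclvgCall σ1 σ2 U K τ) (gd σ1 σ2 U τ K) K := by
  rcases lt_trichotomy K U with hKU | hKU | hKU
  · rw [gd, if_pos hKU]
    apply (br1_hasDeriv h1 h2 hU hτ K).congr_of_eventuallyEq
    filter_upwards [eventually_lt_nhds hKU] with x hx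
    exact call_eq_br1 h1 h2 hU hτ hx
  · rw [hKU]
    have hIic : HasDerivWithinAt (fun K => pclvgCall σ1 σ2 U K τ) (gd σ1 σ2 U τ U)
        (Set.Iic U) U := by
      rw [gd, if_neg (lt_irrefl U), ← gd1_eq_gd2_at_U h1 h2 hU hτ]
      apply ((br1_hasDeriv h1 h2 hU hτ U).hasDerivWithinAt).congr
      · intro x hx
        rcases lt_or_eq_of_le (Set.mem_Iic.1 hx) with h | h
        · exact call_eq_br1 h1 h2 hU hτ h
        · rw [h, call_eq_br2 h1 h2 hU hτ (lt_irrefl U), br1_eq_br2_at_U h1 h2 hU hτ]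
      · rw [call_eq_br2 h1 h2 hU hτ (lt_irrefl U), br1_eq_br2_at_U h1 h2 hU hτ]
    have hIci : HasDerivWithinAt (fun K => pclvgCall σ1 σ2 U K τ) (gd σ1 σ2 U τ U)
        (Set.Ici U) U := by
      rw [gd, if_neg (lt_irrefl U)]
      apply ((br2_hasDeriv h1 h2 hU hτ U).hasDerivWithinAt).congr
      · intro x hx
        exact call_eq_br2 h1 h2 hU hτ (not_lt.2 (Set.mem_Ici.1 hx))
      · exact call_eq_br2 h1 h2 hU hτ (lt_irrefl U)
    have := hIic.union hIci
    rwa [Set.Iic_union_Ici, hasDerivWithinAt_univ] at this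
  · rw [gd, if_neg (not_lt.2 hKU.le)]
    apply (br2_hasDeriv h1 h2 hU hτ K).congr_of_eventuallyEq
    filter_upwards [eventually_gt_nhds hKU] with x hx
    exact call_eq_br2 h1 h2 hU hτ (not_lt.2 hx.le)
end derivK

section gdprops
variable {σ1 σ2 U τ : ℝ}

lemma gd1_mono (h1 : 0 < σ1) (h2 : 0 < σ2) (hU : 0 < U) (hτ : 0 < τ)
    {K1 K2 : ℝ} (hK1 : 0 ≤ K1) (h12 : K1 ≤ K2) :
    gd1 σ1 σ2 U τ K1 ≤ gd1 σ1 σ2 U τ K2 := by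
  rw [gd1, gd1]
  have hD := D_pos h1 h2 hU hτ
  have hc : 0 < σ1 * τ := mul_pos h1 hτ
  have key : ∀ K : ℝ, Real.exp ((K - U) / (σ1 * τ)) + Real.exp (-((K + U) / (σ1 * τ)))
      = 2 * Real.exp (-(U / (σ1 * τ))) * Real.cosh (K / (σ1 * τ)) := by
    intro K
    rw [Real.cosh_eq]
    have a1 : Real.exp ((K - U) / (σ1 * τ))
        = Real.exp (-(U / (σ1 * τ))) * Real.exp (K / (σ1 * τ)) := by
      rw [← Real.exp_add]; congr 1; ring
    have a2 : Real.exp (-((K + U) / (σ1 * τ)))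
        = Real.exp (-(U / (σ1 * τ))) * Real.exp (-(K / (σ1 * τ))) := by
      rw [← Real.exp_add]; congr 1; ring
    rw [a1, a2]; ring
  rw [key K1, key K2]
  have hcosh : Real.cosh (K1 / (σ1 * τ)) ≤ Real.cosh (K2 / (σ1 * τ)) := by
    rw [Real.cosh_le_cosh]
    rw [abs_of_nonneg (div_nonneg hK1 hc.le), abs_of_nonneg (div_nonneg (hK1.trans h12) hc.le)]
    gcongr
  have hnum : 2 * Real.exp (-(U / (σ1 * τ))) * Real.cosh (K1 / (σ1 * τ))
      ≤ 2 * Real.exp (-(U / (σ1 * τ))) * Real.cosh (K2 / (σ1 * τ)) := by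
    have := Real.exp_pos (-(U / (σ1 * τ)))
    nlinarith
  have hden : 0 < σ1 * pclvgD σ1 σ2 U τ := by positivity
  have := (div_le_div_iff_of_pos_right hden).2 hnum
  linarith

lemma gd2_mono (h1 : 0 < σ1) (h2 : 0 < σ2) (hU : 0 < U) (hτ : 0 < τ)
    {K1 K2 : ℝ} (h12 : K1 ≤ K2) :
    gd2 σ1 σ2 U τ K1 ≤ gd2 σ1 σ2 U τ K2 := by
  rw [gd2, gd2]
  have hD := D_pos h1 h2 hU hτ
  have hE1 : Real.exp (-2 * U / (σ1 * τ)) < 1 := E_lt_one h1 hU hτ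
  have hcoef : 0 ≤ (1 - Real.exp (-2 * U / (σ1 * τ))) / (σ2 * pclvgD σ1 σ2 U τ) := by
    apply div_nonneg (by linarith) (by positivity)
  have hexp : Real.exp (-((K2 - U) / (σ2 * τ))) ≤ Real.exp (-((K1 - U) / (σ2 * τ))) := by
    apply Real.exp_le_exp.2
    have : (K1 - U) / (σ2 * τ) ≤ (K2 - U) / (σ2 * τ) := by gcongr
    linarith
  nlinarith [Real.exp_pos (-((K2 - U) / (σ2 * τ)))]

lemma gd_mono (h1 : 0 < σ1) (h2 : 0 < σ2) (hU : 0 < U) (hτ : 0 < τ) :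
    MonotoneOn (fun K => gd σ1 σ2 U τ K) (Set.Ioi 0) := by
  intro K1 hK1 K2 hK2 h12
  simp only [gd]
  rcases lt_or_ge K2 U with h2U | h2U
  · rw [if_pos (lt_of_le_of_lt h12 h2U), if_pos h2U]
    exact gd1_mono h1 h2 hU hτ (le_of_lt hK1) h12
  · rw [if_neg (not_lt.2 h2U)]
    rcases lt_or_ge K1 U with h1U | h1U
    · rw [if_pos h1U]
      calc gd1 σ1 σ2 U τ K1 ≤ gd1 σ1 σ2 U τ U :=
            gd1_mono h1 h2 hU hτ (le_of_lt hK1) h1U.le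
        _ = gd2 σ1 σ2 U τ U := gd1_eq_gd2_at_U h1 h2 hU hτ
        _ ≤ gd2 σ1 σ2 U τ K2 := gd2_mono h1 h2 hU hτ h2U
    · rw [if_neg (not_lt.2 h1U)]
      exact gd2_mono h1 h2 hU hτ h12

lemma gd_nonpos (h1 : 0 < σ1) (h2 : 0 < σ2) (hU : 0 < U) (hτ : 0 < τ)
    {K : ℝ} (hK : 0 < K) : gd σ1 σ2 U τ K ≤ 0 := by
  have hD := D_pos h1 h2 hU hτ
  have hE1 : Real.exp (-2 * U / (σ1 * τ)) < 1 := E_lt_one h1 hU hτ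
  have hgd2 : ∀ K' : ℝ, gd2 σ1 σ2 U τ K' ≤ 0 := by
    intro K'
    rw [gd2]
    have hcoef : 0 ≤ (1 - Real.exp (-2 * U / (σ1 * τ))) / (σ2 * pclvgD σ1 σ2 U τ) := by
      apply div_nonneg (by linarith) (by positivity)
    have := Real.exp_pos (-((K' - U) / (σ2 * τ)))
    nlinarith
  rw [gd]
  rcases lt_or_ge K U with hKU | hKU
  · rw [if_pos hKU]
    calc gd1 σ1 σ2 U τ K ≤ gd1 σ1 σ2 U τ U := gd1_mono h1 h2 hU hτ hK.le hKU.le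
      _ = gd2 σ1 σ2 U τ U := gd1_eq_gd2_at_U h1 h2 hU hτ
      _ ≤ 0 := hgd2 U
  · rw [if_neg (not_lt.2 hKU)]
    exact hgd2 K

lemma part_ii (h1 : 0 < σ1) (h2 : 0 < σ2) (hU : 0 < U) (hτ : 0 < τ) :
    AntitoneOn (fun K => pclvgCall σ1 σ2 U K τ) (Set.Ioi 0) := by
  apply antitoneOn_of_deriv_nonpos (convex_Ioi 0)
  · exact (Differentiable.continuous
      (fun K => (call_hasDeriv h1 h2 hU hτ K).differentiableAt)).continuousOn
  · intro x _
    exact (call_hasDeriv h1 h2 hU hτ x).differentiableAt.differentiableWithinAt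
  · intro x hx
    rw [interior_Ioi] at hx
    rw [(call_hasDeriv h1 h2 hU hτ x).deriv]
    exact gd_nonpos h1 h2 hU hτ hx

lemma part_iii (h1 : 0 < σ1) (h2 : 0 < σ2) (hU : 0 < U) (hτ : 0 < τ) :
    ConvexOn ℝ (Set.Ioi 0) (fun K => pclvgCall σ1 σ2 U K τ) := by
  have hmono : MonotoneOn (deriv (fun K => pclvgCall σ1 σ2 U K τ))
      (interior (Set.Ioi 0)) := by
    rw [interior_Ioi]
    intro x hx y hy hxy
    rw [(call_hasDeriv h1 h2 hU hτ x).deriv, (call_hasDeriv h1 h2 hU hτ y).deriv]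
    exact gd_mono h1 h2 hU hτ hx hy hxy
  apply hmono.convexOn_of_deriv (convex_Ioi 0)
  · exact (Differentiable.continuous
      (fun K => (call_hasDeriv h1 h2 hU hτ K).differentiableAt)).continuousOn
  · intro x _
    exact (call_hasDeriv h1 h2 hU hτ x).differentiableAt.differentiableWithinAt
end gdprops

section forms
variable {σ1 σ2 U K τ : ℝ}

lemma call_form_lt (h1 : 0 < σ1) (h2 : 0 < σ2) (hU : 0 < U) (hτ : 0 < τ)
    (hK : 0 < K) (hKU : K < U) :
    pclvgCall σ1 σ2 U K τ = (U - K) + Real.sinh (K/σ1 * (1/τ)) /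
      ((Real.cosh (U/σ1 * (1/τ))/σ1 + Real.sinh (U/σ1 * (1/τ))/σ2) * (1/τ)) := by
  rw [pclvgCall, if_pos hKU, D_eq h1 h2]
  have hs : (0:ℝ) < σ1 * τ := mul_pos h1 hτ
  rw [show (-(U - K) / (σ1 * τ)) = K/(σ1*τ) - U/(σ1*τ) by ring, Real.exp_sub]
  rw [show (-2 * K / (σ1 * τ)) = -(K/(σ1*τ)) + -(K/(σ1*τ)) by ring, Real.exp_add,
    Real.exp_neg]
  rw [show (-2 * U / (σ1 * τ)) = -(U/(σ1*τ)) + -(U/(σ1*τ)) by ring, Real.exp_add,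
    Real.exp_neg]
  rw [show K/σ1 * (1/τ) = K/(σ1*τ) by ring, show U/σ1 * (1/τ) = U/(σ1*τ) by ring]
  rw [Real.sinh_eq, Real.cosh_eq, Real.sinh_eq, Real.exp_neg, Real.exp_neg]
  have he1 : (0:ℝ) < Real.exp (K/(σ1*τ)) := Real.exp_pos _
  have he2 : (1:ℝ) < Real.exp (U/(σ1*τ)) := Real.one_lt_exp_iff.2 (by positivity)
  congr 1
  rw [div_eq_div_iff]
  · field_simp
  · -- denominator 1 nonzero
    have hi : (Real.exp (U/(σ1*τ)))⁻¹ < 1 := by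
      rw [inv_lt_one_iff₀]; right; exact he2
    have hipos : 0 < (Real.exp (U/(σ1*τ)))⁻¹ := by positivity
    have hA : 0 < 1 + (Real.exp (U/(σ1*τ)))⁻¹ * (Real.exp (U/(σ1*τ)))⁻¹ := by positivity
    have hB : 0 < 1 - (Real.exp (U/(σ1*τ)))⁻¹ * (Real.exp (U/(σ1*τ)))⁻¹ := by nlinarith
    positivity
  · have hg : 0 < Real.exp (U / (σ1 * τ)) - (Real.exp (U / (σ1 * τ)))⁻¹ := by
      have : (Real.exp (U/(σ1*τ)))⁻¹ < 1 := by
        rw [inv_lt_one_iff₀]; right; exact he2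
      linarith
    positivity

lemma call_form_ge (h1 : 0 < σ1) (h2 : 0 < σ2) (hU : 0 < U) (hτ : 0 < τ)
    (hKU : ¬ K < U) :
    pclvgCall σ1 σ2 U K τ = Real.exp ((U-K)/σ2 * (1/τ)) * (Real.sinh (U/σ1 * (1/τ)) /
      ((Real.cosh (U/σ1 * (1/τ))/σ1 + Real.sinh (U/σ1 * (1/τ))/σ2) * (1/τ))) := by
  rw [pclvgCall, if_neg hKU, D_eq h1 h2]
  have hs : (0:ℝ) < σ1 * τ := mul_pos h1 hτ
  rw [show (-(K - U) / (σ2 * τ)) = (U-K)/σ2 * (1/τ) by ring]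
  rw [show (-2 * U / (σ1 * τ)) = -(U/(σ1*τ)) + -(U/(σ1*τ)) by ring, Real.exp_add,
    Real.exp_neg (U/(σ1*τ))]
  rw [show U/σ1 * (1/τ) = U/(σ1*τ) by ring]
  rw [Real.sinh_eq, Real.cosh_eq, Real.exp_neg (U/(σ1*τ))]
  have he1 : (0:ℝ) < Real.exp (U/(σ1*τ)) := Real.exp_pos _
  have he2 : (1:ℝ) < Real.exp (U/(σ1*τ)) := Real.one_lt_exp_iff.2 (by positivity)
  have hi : (Real.exp (U/(σ1*τ)))⁻¹ < 1 := by
    rw [inv_lt_one_iff₀]; right; exact he2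
  have hipos : 0 < (Real.exp (U/(σ1*τ)))⁻¹ := by positivity
  have hB : 0 < 1 - (Real.exp (U/(σ1*τ)))⁻¹ * (Real.exp (U/(σ1*τ)))⁻¹ := by nlinarith
  have hg : 0 < Real.exp (U / (σ1 * τ)) - (Real.exp (U / (σ1 * τ)))⁻¹ := by linarith
  conv_rhs => rw [← mul_div_assoc]
  rw [div_eq_div_iff (by positivity) (by positivity)]
  field_simp

lemma hA_aux {σ1 β γ u v : ℝ} (h1 : 0 < σ1) (hβ : 0 < β) (hβγ : β ≤ γ)
    (hu : 0 < u) (huv : u ≤ v) :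
    u * (Real.sinh (β*v) * Real.cosh (γ*u)) ≤ v * (Real.sinh (β*u) * Real.cosh (γ*v)) := by
  have hv : 0 < v := lt_of_lt_of_le hu huv
  have l3 : (β*u) * Real.cosh (β*u) * Real.sinh (β*v)
      ≤ (β*v) * Real.cosh (β*v) * Real.sinh (β*u) :=
    L3 (mul_pos hβ hu) (by gcongr)
  have l6 : Real.cosh (γ*u) * Real.cosh (β*v) ≤ Real.cosh (γ*v) * Real.cosh (β*u) :=
    L6 hβ.le hβγ hu.le huv
  have c1 : 0 < Real.cosh (β*u) := Real.cosh_pos _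
  have c2 : 0 < Real.cosh (β*v) := Real.cosh_pos _
  have c3 : 0 < Real.cosh (γ*u) := Real.cosh_pos _
  have c4 : 0 < Real.cosh (γ*v) := Real.cosh_pos _
  have s1 : 0 < Real.sinh (β*u) := Real.sinh_pos_iff.2 (mul_pos hβ hu)
  have s2 : 0 < Real.sinh (β*v) := Real.sinh_pos_iff.2 (mul_pos hβ hv)
  have hmul : ((β*u) * Real.cosh (β*u) * Real.sinh (β*v)) * (Real.cosh (γ*u) * Real.cosh (β*v))
      ≤ ((β*v) * Real.cosh (β*v) * Real.sinh (β*u)) * (Real.cosh (γ*v) * Real.cosh (β*u)) := by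
    apply mul_le_mul l3 l6 (by positivity) (by positivity)
  have key : (u * (Real.sinh (β*v) * Real.cosh (γ*u))) * (β * (Real.cosh (β*u) * Real.cosh (β*v)))
      ≤ (v * (Real.sinh (β*u) * Real.cosh (γ*v))) * (β * (Real.cosh (β*u) * Real.cosh (β*v))) := by
    calc (u * (Real.sinh (β*v) * Real.cosh (γ*u))) * (β * (Real.cosh (β*u) * Real.cosh (β*v)))
        = ((β*u) * Real.cosh (β*u) * Real.sinh (β*v)) * (Real.cosh (γ*u) * Real.cosh (β*v)) := by
          ring
      _ ≤ ((β*v) * Real.cosh (β*v) * Real.sinh (β*u)) * (Real.cosh (γ*v) * Real.cosh (β*u)) :=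
          hmul
      _ = (v * (Real.sinh (β*u) * Real.cosh (γ*v))) * (β * (Real.cosh (β*u) * Real.cosh (β*v))) := by
          ring
  exact le_of_mul_le_mul_right key (by positivity)

lemma hB_aux {β γ u v : ℝ} (hβ : 0 < β) (hβγ : β ≤ γ) (hu : 0 < u) (huv : u ≤ v) :
    u * (Real.sinh (β*v) * Real.sinh (γ*u)) ≤ v * (Real.sinh (β*u) * Real.sinh (γ*v)) := by
  have hv : 0 < v := lt_of_lt_of_le hu huv
  have l5 := L5 hβ hβγ hu huv
  have s2 : 0 < Real.sinh (β*v) := Real.sinh_pos_iff.2 (mul_pos hβ hv)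
  have s3 : 0 < Real.sinh (γ*u) := Real.sinh_pos_iff.2 (mul_pos (lt_of_lt_of_le hβ hβγ) hu)
  calc u * (Real.sinh (β*v) * Real.sinh (γ*u))
      = u * (Real.sinh (γ*u) * Real.sinh (β*v)) := by ring
    _ ≤ v * (Real.sinh (γ*v) * Real.sinh (β*u)) := by
        apply mul_le_mul huv l5 (by positivity) hv.le
    _ = v * (Real.sinh (β*u) * Real.sinh (γ*v)) := by ring

lemma part_iv {σ1 σ2 U K : ℝ} (h1 : 0 < σ1) (h2 : 0 < σ2) (hU : 0 < U) (hK : 0 < K) :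
    MonotoneOn (fun τ => pclvgCall σ1 σ2 U K τ) (Set.Ioi 0) := by
  intro τ1 hτ1 τ2 hτ2 h12
  simp only [Set.mem_Ioi] at hτ1 hτ2
  set u := 1/τ2 with hu'
  set v := 1/τ1 with hv'
  have hu : 0 < u := by positivity
  have hv : 0 < v := by positivity
  have huv : u ≤ v := by
    rw [hu', hv']
    gcongr
  set γ := U/σ1 with hγ'
  have hγ : 0 < γ := div_pos hU h1
  have hsinhγ : ∀ w : ℝ, 0 < w → 0 < Real.sinh (γ * w) := fun w hw =>
    Real.sinh_pos_iff.2 (mul_pos hγ hw)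
  have hden : ∀ w : ℝ, 0 < w →
      0 < (Real.cosh (γ*w)/σ1 + Real.sinh (γ*w)/σ2) * w := by
    intro w hw
    have := hsinhγ w hw
    have := Real.cosh_pos (γ*w)
    positivity
  show pclvgCall σ1 σ2 U K τ1 ≤ pclvgCall σ1 σ2 U K τ2
  by_cases hKU : K < U
  · rw [call_form_lt h1 h2 hU hτ1 hK hKU, call_form_lt h1 h2 hU hτ2 hK hKU]
    rw [← hu', ← hv', ← hγ']
    set β := K/σ1 with hβ'
    have hβ : 0 < β := div_pos hK h1
    have hβγ : β ≤ γ := by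
      rw [hβ', hγ']
      exact (div_le_div_iff_of_pos_right h1).2 hKU.le
    apply add_le_add_right
    rw [div_le_div_iff₀ (hden v hv) (hden u hu)]
    have hA := hA_aux h1 hβ hβγ hu huv
    have hB := hB_aux hβ hβγ hu huv
    calc Real.sinh (β*v) * ((Real.cosh (γ*u)/σ1 + Real.sinh (γ*u)/σ2) * u)
        = (u * (Real.sinh (β*v) * Real.cosh (γ*u)))/σ1
          + (u * (Real.sinh (β*v) * Real.sinh (γ*u)))/σ2 := by ring
      _ ≤ (v * (Real.sinh (β*u) * Real.cosh (γ*v)))/σ1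
          + (v * (Real.sinh (β*u) * Real.sinh (γ*v)))/σ2 := by
          exact add_le_add ((div_le_div_iff_of_pos_right h1).2 hA) ((div_le_div_iff_of_pos_right h2).2 hB)
      _ = Real.sinh (β*u) * ((Real.cosh (γ*v)/σ1 + Real.sinh (γ*v)/σ2) * v) := by ring
  · rw [call_form_ge h1 h2 hU hτ1 hKU, call_form_ge h1 h2 hU hτ2 hKU]
    rw [← hu', ← hv', ← hγ']
    push_neg at hKU
    have hexp : Real.exp ((U-K)/σ2 * v) ≤ Real.exp ((U-K)/σ2 * u) := by
      apply Real.exp_le_exp.2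
      have hd : (U-K)/σ2 ≤ 0 := div_nonpos_of_nonpos_of_nonneg (by linarith) h2.le
      nlinarith
    have hQ : Real.sinh (γ*v) / ((Real.cosh (γ*v)/σ1 + Real.sinh (γ*v)/σ2) * v)
        ≤ Real.sinh (γ*u) / ((Real.cosh (γ*u)/σ1 + Real.sinh (γ*u)/σ2) * u) := by
      rw [div_le_div_iff₀ (hden v hv) (hden u hu)]
      have hA : u * (Real.sinh (γ*v) * Real.cosh (γ*u))
          ≤ v * (Real.sinh (γ*u) * Real.cosh (γ*v)) := by
        have l3 : (γ*u) * Real.cosh (γ*u) * Real.sinh (γ*v)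
            ≤ (γ*v) * Real.cosh (γ*v) * Real.sinh (γ*u) := L3 (mul_pos hγ hu) (by gcongr)
        have key : (u * (Real.sinh (γ*v) * Real.cosh (γ*u))) * γ
            ≤ (v * (Real.sinh (γ*u) * Real.cosh (γ*v))) * γ := by
          calc (u * (Real.sinh (γ*v) * Real.cosh (γ*u))) * γ
              = (γ*u) * Real.cosh (γ*u) * Real.sinh (γ*v) := by ring
            _ ≤ (γ*v) * Real.cosh (γ*v) * Real.sinh (γ*u) := l3
            _ = (v * (Real.sinh (γ*u) * Real.cosh (γ*v))) * γ := by ring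
        exact le_of_mul_le_mul_right key hγ
      have hB : u * (Real.sinh (γ*v) * Real.sinh (γ*u))
          ≤ v * (Real.sinh (γ*u) * Real.sinh (γ*v)) := by
        have h0 : 0 ≤ Real.sinh (γ*v) * Real.sinh (γ*u) := by
          have := hsinhγ v hv
          have := hsinhγ u hu
          positivity
        calc u * (Real.sinh (γ*v) * Real.sinh (γ*u))
            ≤ v * (Real.sinh (γ*v) * Real.sinh (γ*u)) := by
              apply mul_le_mul_of_nonneg_right huv h0
          _ = v * (Real.sinh (γ*u) * Real.sinh (γ*v)) := by ring
      calc Real.sinh (γ*v) * ((Real.cosh (γ*u)/σ1 + Real.sinh (γ*u)/σ2) * u)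
          = (u * (Real.sinh (γ*v) * Real.cosh (γ*u)))/σ1
            + (u * (Real.sinh (γ*v) * Real.sinh (γ*u)))/σ2 := by ring
        _ ≤ (v * (Real.sinh (γ*u) * Real.cosh (γ*v)))/σ1
            + (v * (Real.sinh (γ*u) * Real.sinh (γ*v)))/σ2 := by
            exact add_le_add ((div_le_div_iff_of_pos_right h1).2 hA) ((div_le_div_iff_of_pos_right h2).2 hB)
        _ = Real.sinh (γ*u) * ((Real.cosh (γ*v)/σ1 + Real.sinh (γ*v)/σ2) * v) := by ring
    apply mul_le_mul hexp hQ _ (Real.exp_pos _).le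
    apply div_nonneg (hsinhγ v hv).le (hden v hv).le


/-- Static no-arbitrage properties of the PCLVG call prices:
(i) `(U−K)⁺ < C^σ(U,K,τ) < U`; (ii) nonincreasing in the strike; (iii) convex in the strike;
(iv) nondecreasing in the maturity. -/
theorem pclvg_static_no_arbitrage (σ1 σ2 U : ℝ)
    (h1 : 0 < σ1) (h2 : 0 < σ2) (hU : 0 < U) :
    (∀ τ K : ℝ, 0 < τ → 0 < K →
      max (U - K) 0 < pclvgCall σ1 σ2 U K τ ∧ pclvgCall σ1 σ2 U K τ < U) ∧
    (∀ τ : ℝ, 0 < τ → AntitoneOn (fun K => pclvgCall σ1 σ2 U K τ) (Set.Ioi 0)) ∧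
    (∀ τ : ℝ, 0 < τ → ConvexOn ℝ (Set.Ioi 0) (fun K => pclvgCall σ1 σ2 U K τ)) ∧
    (∀ K : ℝ, 0 < K → MonotoneOn (fun τ => pclvgCall σ1 σ2 U K τ) (Set.Ioi 0)) := by
  refine ⟨fun τ K hτ hK => part_i h1 h2 hU hτ hK,
    fun τ hτ => part_ii h1 h2 hU hτ,
    fun τ hτ => part_iii h1 h2 hU hτ,
    fun K hK => part_iv h1 h2 hU hK⟩
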